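/- For every nonnegative integer n, the number of matrices [[a,b],[c,d]] in SL₂(ℕ₀) with ac + bc + bd = n equals τ(n² + n + 1), the number of positive divisors of n² + n + 1. -/
import Mathlib

/-- Rotation by the Eisenstein unit: preserves the form and the divisibility conditions. -/
lemma eis_rot (E N a b : ℤ) (hQ : a^2 + a*b + b^2 = E)
    (h1 : E ∣ N*a - b) (h2 : E ∣ a + b + N*b) :
    (-b)^2 + (-b)*(a+b) + (a+b)^2 = E ∧ E ∣ N*(-b) - (a+b) ∧
      E ∣ (-b) + (a+b) + N*(a+b) := by
  refine ⟨by linear_combination hQ, ?_, ?_⟩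
  · have h : N*(-b) - (a+b) = -(a + b + N*b) := by ring
    rw [h]; exact dvd_neg.mpr h2
  · have h : (-b) + (a+b) + N*(a+b) = (N*a - b) + (a + b + N*b) := by ring
    rw [h]; exact dvd_add h1 h2

/-- Normalize a representation to the fundamental sector a ≥ 1, b ≥ 0. -/
lemma eis_normalize (E N a b : ℤ) (hE : 1 ≤ E) (hQ : a^2 + a*b + b^2 = E)
    (h1 : E ∣ N*a - b) (h2 : E ∣ a + b + N*b) :
    ∃ a₀ b₀ : ℤ, 1 ≤ a₀ ∧ 0 ≤ b₀ ∧ a₀^2 + a₀*b₀ + b₀^2 = E ∧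
      E ∣ N*a₀ - b₀ ∧ E ∣ a₀ + b₀ + N*b₀ := by
  have hne : ¬(a = 0 ∧ b = 0) := by rintro ⟨rfl, rfl⟩; norm_num at hQ; linarith
  have P1 := eis_rot E N a b hQ h1 h2
  have P2 := eis_rot E N _ _ P1.1 P1.2.1 P1.2.2
  have P3 := eis_rot E N _ _ P2.1 P2.2.1 P2.2.2
  have P4 := eis_rot E N _ _ P3.1 P3.2.1 P3.2.2
  have P5 := eis_rot E N _ _ P4.1 P4.2.1 P4.2.2
  by_cases hb : 0 ≤ b
  · by_cases ha : 1 ≤ a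
    · exact ⟨a, b, ha, hb, hQ, h1, h2⟩
    · push_neg at ha
      by_cases hb0 : b = 0
      · have ha0 : a ≠ 0 := fun h => hne ⟨h, hb0⟩
        refine ⟨_, _, ?_, ?_, P3.1, P3.2.1, P3.2.2⟩
        · have : a ≤ -1 := by rcases lt_or_eq_of_le (by linarith : a ≤ 0) with h|h
                              · linarith
                              · exact absurd h ha0
          linarith
        · linarith
      · have hb1 : 1 ≤ b := by
          rcases lt_or_eq_of_le hb with h|h
          · linarith
          · exact absurd h.symm hb0
        by_cases hab : a + b ≤ 0
        · refine ⟨_, _, ?_, ?_, P4.1, P4.2.1, P4.2.2⟩ <;> linarith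
        · push_neg at hab
          refine ⟨_, _, ?_, ?_, P5.1, P5.2.1, P5.2.2⟩ <;> linarith
  · push_neg at hb
    by_cases ha : 1 ≤ a
    · by_cases hab : 0 ≤ a + b
      · refine ⟨_, _, ?_, ?_, P1.1, P1.2.1, P1.2.2⟩ <;> linarith
      · push_neg at hab
        refine ⟨_, _, ?_, ?_, P2.1, P2.2.1, P2.2.2⟩ <;> linarith
    · push_neg at ha
      by_cases ha0 : a = 0
      · refine ⟨_, _, ?_, ?_, P2.1, P2.2.1, P2.2.2⟩ <;> subst ha0 <;> linarith
      · have : a ≤ -1 := by rcases lt_or_eq_of_le (by linarith : a ≤ 0) with h|h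
                            · linarith
                            · exact absurd h ha0
        refine ⟨_, _, ?_, ?_, P3.1, P3.2.1, P3.2.2⟩ <;> linarith

/-- Descent: every e dividing k²+k+1 is represented by the Eisenstein norm form,
with the representation dividing 1+kω. -/
lemma eis_descent : ∀ e : ℕ, 0 < e → ∀ k : ℤ, (e:ℤ) ∣ k^2 + k + 1 →
    ∃ a b : ℤ, a^2 + a*b + b^2 = (e:ℤ) ∧ (e:ℤ) ∣ k*a - b ∧ (e:ℤ) ∣ a + b + k*b := by
  intro e
  induction e using Nat.strong_induction_on with
  | _ e IH =>
    intro he k hk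
    by_cases he1 : e = 1
    · subst he1
      exact ⟨1, 0, by norm_num, ⟨k*1 - 0, by push_cast; ring⟩, ⟨1+0+k*0, by push_cast; ring⟩⟩
    · have he2 : (2:ℤ) ≤ (e:ℤ) := by exact_mod_cast (by omega : 2 ≤ e)
      have hepos : (0:ℤ) < (e:ℤ) := by linarith
      set r : ℤ := k % (e:ℤ) with hr
      have hr0 : 0 ≤ r := Int.emod_nonneg k (by positivity)
      have hr1 : r < (e:ℤ) := Int.emod_lt_of_pos k hepos
      have hkr : (e:ℤ) ∣ k - r := ⟨k / e, by rw [hr, Int.emod_def]; ring⟩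
      set k' : ℤ := if 2*r ≤ (e:ℤ) then r else r - e with hk'
      have hkk' : (e:ℤ) ∣ k - k' := by
        rw [hk']; split_ifs
        · exact hkr
        · have : k - (r - e) = (k - r) + e * 1 := by ring
          rw [this]; exact dvd_add hkr ⟨1, rfl⟩
      have hbnd : -(e:ℤ) < 2*k' ∧ 2*k' ≤ (e:ℤ) := by
        rw [hk']; split_ifs with h
        · exact ⟨by linarith, h⟩
        · push_neg at h; exact ⟨by linarith, by linarith⟩
      have hm : (e:ℤ) ∣ k'^2 + k' + 1 := by
        have h : k'^2 + k' + 1 = (k^2 + k + 1) + (k' - k)*(k' + k + 1) := by ring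
        rw [h]
        exact dvd_add hk (dvd_mul_of_dvd_left (by
          have : k' - k = -(k - k') := by ring
          rw [this]; exact dvd_neg.mpr hkk') _)
      have hmpos : 0 < k'^2 + k' + 1 := by nlinarith [sq_nonneg (2*k' + 1)]
      obtain ⟨e', hE'⟩ := hm
      have he'pos : 0 < e' := by nlinarith
      have hmlt : k'^2 + k' + 1 < (e:ℤ)^2 := by
        have hsq : (2*k' + 1)^2 ≤ ((e:ℤ) + 1)^2 := by
          nlinarith [hbnd.1, hbnd.2]
        nlinarith [hsq]
      have he'lt : e' < (e:ℤ) := by nlinarith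
      lift e' to ℕ using he'pos.le with e'n he'n
      have he'n_lt : e'n < e := by exact_mod_cast he'lt
      have he'n_pos : 0 < e'n := by exact_mod_cast he'pos
      obtain ⟨a', b', hQ', hD1, hD2⟩ := IH e'n he'n_lt he'n_pos k'
        ⟨(e:ℤ), by linear_combination hE'⟩
      obtain ⟨v, hv⟩ := hD1
      obtain ⟨u, hu⟩ := hD2
      have he'ne : ((e'n:ℤ)) ≠ 0 := by exact_mod_cast he'n_pos.ne'
      refine ⟨u, v, ?_, ?_, ?_⟩
      · have hXY : (a' + b' + k'*b')^2 + (a' + b' + k'*b')*(k'*a' - b') + (k'*a' - b')^2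
            = (e:ℤ) * e'n * e'n := by
          linear_combination (e'n:ℤ) * hE' + (k'^2 + k' + 1) * hQ'
        rw [hu, hv] at hXY
        have := mul_left_cancel₀ (show ((e'n:ℤ)) * (e'n:ℤ) ≠ 0 from mul_ne_zero he'ne he'ne)
          (show ((e'n:ℤ) * (e'n:ℤ)) * (u^2 + u*v + v^2) = ((e'n:ℤ) * (e'n:ℤ)) * e by
            linear_combination hXY)
        exact this
      · have h5 : (e'n:ℤ) * (k'*u - v) = (e'n:ℤ) * (b' * e) := by
          linear_combination (-k') * hu + hv + b' * hE'
        have h6 : k'*u - v = b' * e := mul_left_cancel₀ he'ne h5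
        have h7 : k*u - v = (e:ℤ) * b' + (k - k')*u := by linear_combination h6
        rw [h7]
        exact dvd_add ⟨b', rfl⟩ (hkk'.mul_right u)
      · have h5 : (e'n:ℤ) * (u + v + k'*v) = (e'n:ℤ) * (a' * e) := by
          linear_combination (-1 : ℤ) * hu + (-(1 + k')) * hv + a' * hE'
        have h6 : u + v + k'*v = a' * e := mul_left_cancel₀ he'ne h5
        have h7 : u + v + k*v = (e:ℤ) * a' + (k - k')*v := by linear_combination h6
        rw [h7]
        exact dvd_add ⟨a', rfl⟩ (hkk'.mul_right v)

set_option maxHeartbeats 1000000 in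
lemma eis_uniq (n a b c d a' b' c' d' : ℤ)
    (ha : 1 ≤ a) (hb : 0 ≤ b) (ha' : 1 ≤ a') (hb' : 0 ≤ b')
    (h1 : a*d = b*c + 1) (h2 : a*c + b*c + b*d = n)
    (h1' : a'*d' = b'*c' + 1) (h2' : a'*c' + b'*c' + b'*d' = n)
    (hq : a^2 + a*b + b^2 = a'^2 + a'*b' + b'^2) :
    a = a' ∧ b = b' ∧ c = c' ∧ d = d' := by
  have hE1 : 1 ≤ a^2 + a*b + b^2 := by nlinarith
  have hc : (a^2 + a*b + b^2)*c = a*n - b := by linear_combination a*h2 - b*h1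
  have hd : (a^2 + a*b + b^2)*d = b*n + a + b := by linear_combination b*h2 + (a+b)*h1
  have hc' : (a^2 + a*b + b^2)*c' = a'*n - b' := by
    linear_combination a'*h2' - b'*h1' + c'*hq
  have hd' : (a^2 + a*b + b^2)*d' = b'*n + a' + b' := by
    linear_combination b'*h2' + (a'+b')*h1' + d'*hq
  have hbb : b^2 ≤ a^2 + a*b + b^2 - 1 := by nlinarith
  have hbb' : b'^2 ≤ a^2 + a*b + b^2 - 1 := by nlinarith
  have ha2 : a^2 ≤ a^2 + a*b + b^2 := by nlinarith
  have ha'2 : a'^2 ≤ a^2 + a*b + b^2 := by nlinarith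
  -- a'*b < E
  have k1 : a'*b < a^2 + a*b + b^2 := by
    by_contra hcon
    push_neg at hcon
    have h0 : 0 ≤ a'*b := mul_nonneg (by linarith) hb
    have hsq : (a^2 + a*b + b^2)*(a^2 + a*b + b^2) ≤ (a'*b)*(a'*b) :=
      mul_le_mul hcon hcon (by linarith) h0
    have hprod : a'^2 * b^2 ≤ (a^2 + a*b + b^2)*((a^2 + a*b + b^2) - 1) :=
      mul_le_mul ha'2 hbb (sq_nonneg b) (by linarith)
    nlinarith [hsq, hprod]
  -- a*b' < E
  have k2 : a*b' < a^2 + a*b + b^2 := by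
    by_contra hcon
    push_neg at hcon
    have h0 : 0 ≤ a*b' := mul_nonneg (by linarith) hb'
    have hsq : (a^2 + a*b + b^2)*(a^2 + a*b + b^2) ≤ (a*b')*(a*b') :=
      mul_le_mul hcon hcon (by linarith) h0
    have hprod : a^2 * b'^2 ≤ (a^2 + a*b + b^2)*((a^2 + a*b + b^2) - 1) :=
      mul_le_mul ha2 hbb' (sq_nonneg b') (by linarith)
    nlinarith [hsq, hprod]
  have hV : (a^2 + a*b + b^2)*(a*c' - a'*c) = a'*b - a*b' := by
    linear_combination a*hc' - a'*hc
  have hV0 : a*c' - a'*c = 0 := by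
    have hub : a'*b - a*b' < a^2 + a*b + b^2 := by
      have := mul_nonneg (by linarith : (0:ℤ) ≤ a) hb'
      linarith
    have hlb : -(a^2 + a*b + b^2) < a'*b - a*b' := by
      have := mul_nonneg (by linarith : (0:ℤ) ≤ a') hb
      linarith
    rcases lt_trichotomy (a*c' - a'*c) 0 with h|h|h
    · exfalso
      have ht : a*c' - a'*c ≤ -1 := by linarith [Int.lt_iff_add_one_le.mp h]
      have := mul_le_mul_of_nonneg_left ht (by linarith : (0:ℤ) ≤ a^2 + a*b + b^2)
      linarith [hV, hlb]
    · exact h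
    · exfalso
      have ht : 1 ≤ a*c' - a'*c := Int.lt_iff_add_one_le.mp h
      have := mul_le_mul_of_nonneg_left ht (by linarith : (0:ℤ) ≤ a^2 + a*b + b^2)
      linarith [hV, hub]
  have hV0' : a'*b = a*b' := by
    have h := hV
    rw [hV0] at h
    linarith [h]
  have hU : (a*a' + a*b' + b*b')^2 = (a^2 + a*b + b^2)^2 := by
    linear_combination (-(a^2 + a*b + b^2))*hq -
      ((a*a' + a*b' + b*b') + (a'*b - a*b'))*hV0'
  have hUnn : 0 ≤ a*a' + a*b' + b*b' := by
    have h1n := mul_nonneg (by linarith : (0:ℤ) ≤ a) (by linarith : (0:ℤ) ≤ a')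
    have h2n := mul_nonneg (by linarith : (0:ℤ) ≤ a) hb'
    have h3n := mul_nonneg hb hb'
    linarith
  have hUeq : a*a' + a*b' + b*b' = a^2 + a*b + b^2 := by
    have hz : ((a*a' + a*b' + b*b') - (a^2 + a*b + b^2)) *
        ((a*a' + a*b' + b*b') + (a^2 + a*b + b^2)) = 0 := by linear_combination hU
    rcases mul_eq_zero.mp hz with h|h
    · linarith
    · linarith
  have hEne : (a^2 + a*b + b^2) ≠ 0 := by linarith
  have haa : a' * (a^2 + a*b + b^2) = a * (a^2 + a*b + b^2) := by
    linear_combination (a+b)*hV0' + a*hUeq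
  have hA : a = a' := (mul_right_cancel₀ hEne haa).symm
  have hB : b = b' := by
    have : a * b = a * b' := by rw [hA] at hV0' ⊢; linarith [hV0']
    exact mul_left_cancel₀ (by linarith : a ≠ 0) this
  have hC : c = c' := by
    apply mul_left_cancel₀ hEne
    rw [hc, hc', hA, hB]
  have hD : d = d' := by
    apply mul_left_cancel₀ hEne
    rw [hd, hd', hA, hB]
  exact ⟨hA, hB, hC, hD⟩

lemma eis_exists_sol (n e : ℕ) (he : 0 < e) (hdvd : e ∣ n^2 + n + 1) :
    ∃ a b c d : ℕ, a*d = b*c + 1 ∧ a*c + b*c + b*d = n ∧ a^2 + a*b + b^2 = e := by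
  have hdz : (e:ℤ) ∣ (n:ℤ)^2 + (n:ℤ) + 1 := by exact_mod_cast Int.natCast_dvd_natCast.mpr hdvd
  have hE1 : (1:ℤ) ≤ (e:ℤ) := by exact_mod_cast he
  obtain ⟨a₁, b₁, hQ₁, hd1, hd2⟩ := eis_descent e he (n:ℤ) hdz
  have hd1' : (e:ℤ) ∣ (n:ℤ)*a₁ - b₁ := hd1
  obtain ⟨a, b, ha, hb, hQ, hD1, hD2⟩ := eis_normalize (e:ℤ) (n:ℤ) a₁ b₁ hE1 hQ₁ hd1' hd2
  -- b < e unless b = 0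
  have hblt : (n:ℤ)*a - b ≥ 0 := by
    by_contra hcon
    push_neg at hcon
    have hbpos : 1 ≤ b := by nlinarith [mul_nonneg (by positivity : (0:ℤ) ≤ (n:ℤ)) (by linarith : (0:ℤ) ≤ a), Int.lt_iff_add_one_le.mp hcon]
    have hblt2 : b < (e:ℤ) := by nlinarith
    have hpos : 0 < b - (n:ℤ)*a := by linarith
    have hle : b - (n:ℤ)*a ≤ b := by
      have := mul_nonneg (by positivity : (0:ℤ) ≤ (n:ℤ)) (by linarith : (0:ℤ) ≤ a)
      linarith
    have hdvd2 : (e:ℤ) ∣ b - (n:ℤ)*a := by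
      have h : b - (n:ℤ)*a = -((n:ℤ)*a - b) := by ring
      rw [h]; exact dvd_neg.mpr hD1
    have := Int.le_of_dvd hpos hdvd2
    linarith
  obtain ⟨c, hc⟩ := hD1
  obtain ⟨d, hd⟩ := hD2
  have hec : (n:ℤ)*a - b = (e:ℤ)*c := hc
  have hcnn : 0 ≤ c := by
    by_contra hcon
    push_neg at hcon
    have : (e:ℤ)*c ≤ (e:ℤ)*(-1) := mul_le_mul_of_nonneg_left (by linarith [Int.lt_iff_add_one_le.mp hcon]) (by linarith)
    linarith
  have hdnn : 0 ≤ d := by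
    by_contra hcon
    push_neg at hcon
    have h1 : (e:ℤ)*d ≤ (e:ℤ)*(-1) := mul_le_mul_of_nonneg_left (by linarith [Int.lt_iff_add_one_le.mp hcon]) (by linarith)
    have h2 : 0 ≤ (n:ℤ)*b := mul_nonneg (by positivity) hb
    linarith [hd, h2]
  have hEne : ((e:ℤ)) ≠ 0 := by linarith
  have had : a*d = b*c + 1 := by
    apply mul_left_cancel₀ hEne
    linear_combination b*hc - a*hd + hQ
  have hsum : a*c + b*c + b*d = (n:ℤ) := by
    apply mul_left_cancel₀ hEne
    linear_combination (-(a+b))*hc - b*hd + (n:ℤ)*hQ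
  refine ⟨a.toNat, b.toNat, c.toNat, d.toNat, ?_, ?_, ?_⟩
  · have : ((a.toNat * d.toNat : ℕ) : ℤ) = ((b.toNat * c.toNat + 1 : ℕ) : ℤ) := by
      push_cast [Int.toNat_of_nonneg (by linarith : (0:ℤ) ≤ a), Int.toNat_of_nonneg hb,
        Int.toNat_of_nonneg hcnn, Int.toNat_of_nonneg hdnn]
      linarith [had]
    exact_mod_cast this
  · have : ((a.toNat * c.toNat + b.toNat * c.toNat + b.toNat * d.toNat : ℕ) : ℤ) = ((n : ℕ) : ℤ) := by
      push_cast [Int.toNat_of_nonneg (by linarith : (0:ℤ) ≤ a), Int.toNat_of_nonneg hb,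
        Int.toNat_of_nonneg hcnn, Int.toNat_of_nonneg hdnn]
      linarith [hsum]
    exact_mod_cast this
  · have : ((a.toNat^2 + a.toNat * b.toNat + b.toNat^2 : ℕ) : ℤ) = ((e : ℕ) : ℤ) := by
      push_cast [Int.toNat_of_nonneg (by linarith : (0:ℤ) ≤ a), Int.toNat_of_nonneg hb]
      linarith [hQ]
    exact_mod_cast this

theorem count_sl2_ac_add_bc_add_bd (n : ℕ) :
    Set.ncard {x : ℕ × ℕ × ℕ × ℕ |
        x.1 * x.2.2.2 = x.2.1 * x.2.2.1 + 1 ∧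
          x.1 * x.2.2.1 + x.2.1 * x.2.2.1 + x.2.1 * x.2.2.2 = n} =
      (n^2 + n + 1).divisors.card := by
  classical
  set S : Set (ℕ × ℕ × ℕ × ℕ) := {x : ℕ × ℕ × ℕ × ℕ |
        x.1 * x.2.2.2 = x.2.1 * x.2.2.1 + 1 ∧
          x.1 * x.2.2.1 + x.2.1 * x.2.2.1 + x.2.1 * x.2.2.2 = n} with hS
  set f : ℕ × ℕ × ℕ × ℕ → ℕ := fun x => x.1^2 + x.1 * x.2.1 + x.2.1^2 with hf
  have hNpos : 0 < n^2 + n + 1 := by positivity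
  have hmem : ∀ a b c d : ℕ, (a, b, c, d) ∈ S ↔
      (a*d = b*c + 1 ∧ a*c + b*c + b*d = n) := fun a b c d => Iff.rfl
  have hfval : ∀ a b c d : ℕ, f (a, b, c, d) = a^2 + a*b + b^2 := fun a b c d => rfl
  -- forward: image of f is the set of divisors
  have himg : f '' S = ↑((n^2 + n + 1).divisors) := by
    ext e
    constructor
    · rintro ⟨⟨a, b, c, d⟩, hx, rfl⟩
      obtain ⟨h1, h2⟩ := (hmem a b c d).mp hx
      have h1z : (a:ℤ)*(d:ℤ) = (b:ℤ)*(c:ℤ) + 1 := by exact_mod_cast h1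
      have h2z : (a:ℤ)*(c:ℤ) + (b:ℤ)*(c:ℤ) + (b:ℤ)*(d:ℤ) = (n:ℤ) := by exact_mod_cast h2
      have hNz : ((a:ℤ)^2 + a*b + b^2) * ((c:ℤ)^2 + c*d + d^2) = (n:ℤ)^2 + n + 1 := by
        linear_combination ((a:ℤ)*d - b*c + 1 + n) * h1z +
          ((a:ℤ)*d - (b:ℤ)*c + (a:ℤ)*c + b*c + b*d + n) * h2z
      have hNn : (a^2 + a*b + b^2) * (c^2 + c*d + d^2) = n^2 + n + 1 := by exact_mod_cast hNz
      rw [hfval, Finset.mem_coe, Nat.mem_divisors]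
      exact ⟨⟨_, hNn.symm⟩, hNpos.ne'⟩
    · intro he
      rw [Finset.mem_coe, Nat.mem_divisors] at he
      have hepos : 0 < e := Nat.pos_of_mem_divisors (Nat.mem_divisors.mpr he)
      obtain ⟨a, b, c, d, h1, h2, h3⟩ := eis_exists_sol n e hepos he.1
      exact ⟨(a, b, c, d), (hmem a b c d).mpr ⟨h1, h2⟩, by rw [hfval]; exact h3⟩
  have hinj : Set.InjOn f S := by
    rintro ⟨a, b, c, d⟩ hx ⟨a', b', c', d'⟩ hy hfeq
    obtain ⟨h1, h2⟩ := (hmem a b c d).mp hx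
    obtain ⟨h1', h2'⟩ := (hmem a' b' c' d').mp hy
    rw [hfval, hfval] at hfeq
    have ha : 1 ≤ a := by
      rcases Nat.eq_zero_or_pos a with h | h
      · subst h; simp at h1
      · exact h
    have ha' : 1 ≤ a' := by
      rcases Nat.eq_zero_or_pos a' with h | h
      · subst h; simp at h1'
      · exact h
    have := eis_uniq (n:ℤ) a b c d a' b' c' d'
      (by exact_mod_cast ha) (by positivity) (by exact_mod_cast ha') (by positivity)
      (by exact_mod_cast h1) (by exact_mod_cast h2)
      (by exact_mod_cast h1') (by exact_mod_cast h2')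
      (by exact_mod_cast hfeq)
    obtain ⟨hA, hB, hC, hD⟩ := this
    have : a = a' ∧ b = b' ∧ c = c' ∧ d = d' :=
      ⟨by exact_mod_cast hA, by exact_mod_cast hB, by exact_mod_cast hC, by exact_mod_cast hD⟩
    simp [Prod.ext_iff, this.1, this.2.1, this.2.2.1, this.2.2.2]
  rw [← Set.ncard_coe_finset, ← himg]
  exact (Set.ncard_image_of_injOn hinj).symm
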